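/- Worst-case validation error ratio over the weight sphere: let n' ≥ 1, ζ ∈ {0,1}^{n'}, Q > 0, and m = Σ_i ζ_i. Then the supremum of (n' − ζ·w') / n' over the set {w' ∈ ℝ^{n'} : ‖w' − 1_{n'}‖₂ ≤ Q and Σ_i w'_i = n'} equals 1 − (m − Q √(m − m²/n'))/n', and this supremum is attained. -/

import Mathlib

/-- The all-ones vector in `ℝ^n` (as a Euclidean space). -/
noncomputable def onesVec (n : ℕ) : EuclideanSpace ℝ (Fin n) := WithLp.toLp 2 (fun _ : Fin n => (1 : ℝ))

open RealInnerProductSpace in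
/-- worst-case validation error ratio over the weight sphere:
for `n' ≥ 1`, `ζ ∈ {0,1}^{n'}`, `Q > 0` and `m = Σ_i ζ_i`, the supremum of
`(n' − ζ·w')/n'` over `{w' : ‖w' − 1‖₂ ≤ Q ∧ Σ_i w'_i = n'}` equals
`1 − (m − Q √(m − m²/n'))/n'`, and it is attained. -/
theorem worst_case_error_ratio_over_sphere {n' : ℕ} (hn : 1 ≤ n')
    (ζ : EuclideanSpace ℝ (Fin n')) (hζ : ∀ i, ζ i = 0 ∨ ζ i = 1)
    (Q : ℝ) (hQ : 0 < Q) (m : ℝ) (hm : m = ∑ i, ζ i) :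
    IsGreatest ((fun w' : EuclideanSpace ℝ (Fin n') =>
          ((n' : ℝ) - ∑ i, ζ i * w' i) / (n' : ℝ)) ''
        {w' | ‖w' - onesVec n'‖ ≤ Q ∧ ∑ i, w' i = (n' : ℝ)})
      (1 - (m - Q * Real.sqrt (m - m ^ 2 / (n' : ℝ))) / (n' : ℝ)) := by
  have hn0 : (0:ℝ) < (n' : ℝ) := by exact_mod_cast hn
  have hn0' : (n' : ℝ) ≠ 0 := ne_of_gt hn0
  set e : EuclideanSpace ℝ (Fin n') := onesVec n' with he
  have hinner : ∀ x y : EuclideanSpace ℝ (Fin n'), ⟪x, y⟫ = ∑ i, x i * y i := by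
    intro x y
    simp [PiLp.inner_apply, RCLike.inner_apply, mul_comm]
  have hζe : ⟪ζ, e⟫ = m := by
    rw [hinner]; simp [he, onesVec, hm]
  have hζζ : ⟪ζ, ζ⟫ = m := by
    rw [hinner, hm]
    refine Finset.sum_congr rfl fun i _ => ?_
    rcases hζ i with h | h <;> simp [h]
  have hee : ⟪e, e⟫ = (n' : ℝ) := by
    rw [hinner]; simp [he, onesVec]
  set v : EuclideanSpace ℝ (Fin n') := ζ - ((m / (n' : ℝ)) : ℝ) • e with hv
  have hζv : ⟪ζ, v⟫ = m - m ^ 2 / (n' : ℝ) := by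
    rw [hv, inner_sub_right, real_inner_smul_right, hζζ, hζe]; ring
  have hev : ⟪e, v⟫ = 0 := by
    rw [hv, inner_sub_right, real_inner_smul_right, hee]
    have h : (⟪e, ζ⟫ : ℝ) = m := by rw [real_inner_comm]; exact hζe
    rw [h]; field_simp; ring
  have hvζ' : ⟪v, ζ⟫ = m - m ^ 2 / (n' : ℝ) := by rw [real_inner_comm]; exact hζv
  have hve : ⟪v, e⟫ = 0 := by rw [real_inner_comm]; exact hev
  have hvv : ‖v‖ ^ 2 = m - m ^ 2 / (n' : ℝ) := by
    have hsplit : ⟪v, v⟫ = ⟪v, ζ⟫ - (m / (n' : ℝ)) * ⟪v, e⟫ := by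
      rw [hv, inner_sub_right, real_inner_smul_right]
    rw [← real_inner_self_eq_norm_sq, hsplit, hvζ', hve]
    ring
  have hnv : ‖v‖ = Real.sqrt (m - m ^ 2 / (n' : ℝ)) := by
    rw [← hvv, Real.sqrt_sq (norm_nonneg v)]
  have hsume : ∑ i, e i = (n' : ℝ) := by simp [he, onesVec]
  have hsumv : ∑ i, v i = 0 := by
    have h := hev
    rw [hinner] at h
    simpa [he, onesVec] using h
  rw [← hnv]
  constructor
  · -- membership: attained
    rcases eq_or_ne v 0 with hv0 | hv0
    · refine ⟨e, ⟨?_, hsume⟩, ?_⟩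
      · simp [le_of_lt hQ]
      · show ((n' : ℝ) - ∑ i, ζ i * e i) / (n' : ℝ) = _
        have hζsum : ∑ i, ζ i * e i = m := by rw [← hinner, hζe]
        rw [hζsum]
        have : ‖v‖ = 0 := by rw [hv0]; simp
        rw [this]
        field_simp
        ring
    · have hnv0 : 0 < ‖v‖ := norm_pos_iff.mpr hv0
      refine ⟨e - (Q / ‖v‖) • v, ⟨?_, ?_⟩, ?_⟩
      · have : e - (Q / ‖v‖) • v - e = -((Q / ‖v‖) • v) := by abel
        rw [this, norm_neg, norm_smul, Real.norm_eq_abs, abs_of_pos (div_pos hQ hnv0),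
          div_mul_cancel₀ _ (ne_of_gt hnv0)]
      · have : ∀ i, (e - (Q / ‖v‖) • v) i = e i - (Q / ‖v‖) * v i := by
          intro i; simp [PiLp.sub_apply, PiLp.smul_apply, smul_eq_mul]
        simp only [this, Finset.sum_sub_distrib, ← Finset.mul_sum, hsume, hsumv, mul_zero,
          sub_zero]
      · show ((n' : ℝ) - ∑ i, ζ i * (e - (Q / ‖v‖) • v) i) / (n' : ℝ) = _
        have hζw : ∑ i, ζ i * (e - (Q / ‖v‖) • v) i = m - Q * ‖v‖ := by
          rw [← hinner, inner_sub_right, real_inner_smul_right, hζe, hζv, ← hvv]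
          field_simp
        rw [hζw]
        field_simp
  · -- upper bound
    rintro y ⟨w, ⟨hw1, hw2⟩, rfl⟩
    simp only
    have hζw : ∑ i, ζ i * w i = ⟪v, w - e⟫ + m := by
      rw [inner_sub_right, hv, inner_sub_left, inner_sub_left, real_inner_smul_left,
        real_inner_smul_left]
      have h1 : ⟪ζ, w⟫ = ∑ i, ζ i * w i := hinner ζ w
      have h2 : ⟪e, w⟫ = (n' : ℝ) := by
        rw [hinner]; simp [he, onesVec, hw2]
      rw [h1, h2, hζe, hee]
      field_simp
      ring
    have hcs : -(‖v‖ * ‖w - e‖) ≤ ⟪v, w - e⟫ := by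
      have := abs_real_inner_le_norm v (w - e)
      linarith [abs_le.mp this |>.1]
    have hbound : m - Q * ‖v‖ ≤ ∑ i, ζ i * w i := by
      rw [hζw]
      have : ‖v‖ * ‖w - e‖ ≤ ‖v‖ * Q := by
        exact mul_le_mul_of_nonneg_left hw1 (norm_nonneg v)
      nlinarith
    rw [div_le_iff₀ hn0, sub_mul, one_mul, div_mul_cancel₀ _ hn0']
    linarith
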